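/- arXiv:1306.3146 — 2 statements merged into one kernel-verified Lean document; each statement's English description precedes it below -/
import Mathlib

section
/- Untwisted Kostant degrees of fundamental weights in type C: let n ≥ 1 and let w be a signed permutation of {1,…,n}. For every 1 ≤ i ≤ n, with ω_i = ε₁ + ⋯ + ε_i: n(ω_i, w) = #{j ≤ i : w(j) > i} + #{j ≤ i : w(j) < 0}. -/
/-- The positive roots of type `C_n`, realized in `ℤ^n`: the vectors `ε_i - ε_j`
and `ε_i + ε_j` for `i < j`, and `2ε_i`. -/
def typeCPositiveRoots (n : ℕ) : Set (Fin n → ℤ) :=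
  {v | (∃ i : Fin n, v = Pi.single i 2) ∨
    ∃ i j : Fin n, i < j ∧
      (v = Pi.single i 1 - Pi.single j 1 ∨ v = Pi.single i 1 + Pi.single j 1)}

/-- The set of lengths of decompositions of `v` into a sum of positive roots of
type `C_n` (with repetitions). -/
def typeCDecompLengths (n : ℕ) (v : Fin n → ℤ) : Set ℕ :=
  {N | ∃ l : List (Fin n → ℤ),
    (∀ u ∈ l, u ∈ typeCPositiveRoots n) ∧ l.sum = v ∧ l.length = N}

open Finset

private lemma sum_toList_map {α M : Type*} [AddCommMonoid M] (s : Finset α) (f : α → M) :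
    (s.toList.map f).sum = ∑ x ∈ s, f x := by
  rw [← Multiset.sum_coe, ← Multiset.map_coe, Finset.coe_toList]; rfl

private lemma root_abs_sum {n : ℕ} {u : Fin n → ℤ} (hu : u ∈ typeCPositiveRoots n) :
    ∑ m, |u m| = 2 := by
  obtain ⟨a, rfl⟩ | ⟨a, b, hab, rfl | rfl⟩ := hu
  · have h : ∀ m, |(Pi.single a 2 : Fin n → ℤ) m| = if m = a then (2:ℤ) else 0 := by
      intro m; rw [Pi.single_apply]; split_ifs <;> norm_num
    rw [Finset.sum_congr rfl fun m _ => h m, Finset.sum_ite_eq']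
    simp
  · have hab' : a ≠ b := ne_of_lt hab
    have h : ∀ m, |((Pi.single a 1 - Pi.single b 1 : Fin n → ℤ)) m|
        = (if m = a then (1:ℤ) else 0) + (if m = b then 1 else 0) := by
      intro m
      rw [Pi.sub_apply, Pi.single_apply, Pi.single_apply]
      rcases eq_or_ne m a with rfl | ha <;> rcases eq_or_ne m b with rfl | hb <;>
        simp_all
    rw [Finset.sum_congr rfl fun m _ => h m, Finset.sum_add_distrib,
      Finset.sum_ite_eq', Finset.sum_ite_eq']
    simp
  · have hab' : a ≠ b := ne_of_lt hab
    have h : ∀ m, |((Pi.single a 1 + Pi.single b 1 : Fin n → ℤ)) m|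
        = (if m = a then (1:ℤ) else 0) + (if m = b then 1 else 0) := by
      intro m
      rw [Pi.add_apply, Pi.single_apply, Pi.single_apply]
      rcases eq_or_ne m a with rfl | ha <;> rcases eq_or_ne m b with rfl | hb <;>
        simp_all
    rw [Finset.sum_congr rfl fun m _ => h m, Finset.sum_add_distrib,
      Finset.sum_ite_eq', Finset.sum_ite_eq']
    simp

private lemma list_bound {n : ℕ} : ∀ (l : List (Fin n → ℤ)),
    (∀ u ∈ l, u ∈ typeCPositiveRoots n) → ∑ m, |l.sum m| ≤ 2 * (l.length : ℤ)
  | [], _ => by simp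
  | a :: t, hl => by
    have ha := hl a List.mem_cons_self
    have ht := list_bound t fun u hu => hl u (List.mem_cons_of_mem a hu)
    calc ∑ m, |(a :: t).sum m| = ∑ m, |a m + t.sum m| := by simp
      _ ≤ ∑ m, (|a m| + |t.sum m|) := Finset.sum_le_sum fun m _ => abs_add_le _ _
      _ = 2 + ∑ m, |t.sum m| := by rw [Finset.sum_add_distrib, root_abs_sum ha]
      _ ≤ 2 + 2 * (t.length : ℤ) := by linarith
      _ = 2 * ((a :: t).length : ℤ) := by simp [List.length_cons]; push_cast; ring

private lemma perm_indicator_sum {n : ℕ} (σ : Equiv.Perm (Fin n)) (i : ℕ) :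
    ∑ k : Fin n, (if ((σ k : Fin n) : ℕ) < i then (1:ℤ) else 0)
      = ∑ k : Fin n, (if (k : ℕ) < i then (1:ℤ) else 0) :=
  Fintype.sum_equiv σ _ (fun m => if (m : ℕ) < i then (1:ℤ) else 0) fun k => rfl

private lemma card_filter_int {n : ℕ} (p : Fin n → Prop) [DecidablePred p] :
    (((Finset.univ.filter fun k => p k).card : ℤ)) = ∑ k, if p k then (1:ℤ) else 0 := by
  rw [Finset.card_filter]; push_cast; rfl

private lemma pointwise_v (i a b : ℕ) (sv : ℤ) (hsv : sv = 1 ∨ sv = -1) :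
    (if a < i ∧ i ≤ b then (1:ℤ) else 0) - (if b < i ∧ i ≤ a then sv else 0)
      + (if b < i ∧ sv = -1 ∧ a < i then 2 else 0)
    = (if a < i then (1:ℤ) else 0) - sv * (if b < i then (1:ℤ) else 0) := by
  rcases hsv with rfl | rfl <;> split_ifs <;> first | omega | tauto

private lemma pointwise_len (i a b : ℕ) (sv : ℤ) (hsv : sv = 1 ∨ sv = -1) :
    ((if a < i ∧ i ≤ b then 1 else 0) + (if a < i ∧ sv = -1 ∧ b < i then 1 else 0) : ℕ)
      = (if a < i ∧ sv = 1 ∧ i ≤ b then 1 else 0) + (if a < i ∧ sv = -1 then 1 else 0) := by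
  rcases hsv with rfl | rfl <;> split_ifs <;> first | omega | tauto

private lemma pointwise_abs (i a b : ℕ) (sv : ℤ) (hsv : sv = 1 ∨ sv = -1) :
    |(if b < i then (1:ℤ) else 0) - sv * (if a < i then (1:ℤ) else 0)|
      = 2 * ((if a < i ∧ sv = 1 ∧ i ≤ b then (1:ℤ) else 0)
          + (if a < i ∧ sv = -1 then (1:ℤ) else 0))
        + ((if b < i then (1:ℤ) else 0) - (if a < i then (1:ℤ) else 0)) := by
  rcases hsv with rfl | rfl <;> split_ifs <;>
    first | (norm_num; done) | (exfalso; first | omega | tauto)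

/-- Untwisted Kostant degrees of the fundamental weights in type `C_n`.  A signed
permutation `w` is encoded by a permutation `σ` of the (0-based) index set and
signs `s i ∈ {±1}`, acting by `w(ε_i) = s(i) • ε_{σ(i)}`, so that
`(λ - w(λ))_j = λ_j - s(σ⁻¹ j) * λ_{σ⁻¹ j}`.  In 1-based terms, `w(j) > i` means
`s j = 1` together with `σ(j) > i`, and `w(j) < 0` means `s j = -1`.
For every `1 ≤ i ≤ n`, with `ω_i = ε₁ + ⋯ + ε_i`:
`n(ω_i, w) = #{j ≤ i : w(j) > i} + #{j ≤ i : w(j) < 0}`. -/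
theorem kostant_fundamental_typeC (n : ℕ) (hn : 1 ≤ n)
    (σ : Equiv.Perm (Fin n)) (s : Fin n → ℤ) (hs : ∀ j, s j = 1 ∨ s j = -1)
    (i : ℕ) (hi1 : 1 ≤ i) (hin : i ≤ n) :
    IsLeast (typeCDecompLengths n
        (fun j : Fin n =>
          (if (j : ℕ) < i then (1 : ℤ) else 0) -
            s (σ.symm j) * (if ((σ.symm j : Fin n) : ℕ) < i then (1 : ℤ) else 0)))
      ((Finset.univ.filter (fun j : Fin n =>
          (j : ℕ) < i ∧ s j = 1 ∧ i ≤ ((σ j : Fin n) : ℕ))).card +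
        (Finset.univ.filter (fun j : Fin n => (j : ℕ) < i ∧ s j = -1)).card) := by
  classical
  set v : Fin n → ℤ := fun j : Fin n =>
      (if (j : ℕ) < i then (1 : ℤ) else 0) -
        s (σ.symm j) * (if ((σ.symm j : Fin n) : ℕ) < i then (1 : ℤ) else 0) with hv
  set K1 : Finset (Fin n) :=
      Finset.univ.filter (fun k => (k : ℕ) < i ∧ i ≤ ((σ k : Fin n) : ℕ)) with hK1
  set D : Finset (Fin n) :=
      Finset.univ.filter
        (fun k => (k : ℕ) < i ∧ s k = -1 ∧ ((σ k : Fin n) : ℕ) < i) with hD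
  set M : Finset (Fin n) :=
      Finset.univ.filter (fun m => (m : ℕ) < i ∧ i ≤ ((σ.symm m : Fin n) : ℕ)) with hM
  have hcard : K1.card = M.card := by
    have h1 : (K1.card : ℤ)
        = ∑ k : Fin n, if (k : ℕ) < i ∧ i ≤ ((σ k : Fin n) : ℕ) then (1:ℤ) else 0 :=
      card_filter_int _
    have h2 : (M.card : ℤ)
        = ∑ m : Fin n, if (m : ℕ) < i ∧ i ≤ ((σ.symm m : Fin n) : ℕ) then (1:ℤ) else 0 :=
      card_filter_int _
    have h3 : (∑ m : Fin n, if (m : ℕ) < i ∧ i ≤ ((σ.symm m : Fin n) : ℕ) then (1:ℤ) else 0)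
        = ∑ k : Fin n, if ((σ k : Fin n) : ℕ) < i ∧ i ≤ (k : ℕ) then (1:ℤ) else 0 :=
      (Fintype.sum_equiv σ
        (fun k : Fin n => if ((σ k : Fin n) : ℕ) < i ∧ i ≤ (k : ℕ) then (1:ℤ) else 0)
        (fun m : Fin n => if (m : ℕ) < i ∧ i ≤ ((σ.symm m : Fin n) : ℕ) then (1:ℤ) else 0)
        (fun k => by simp)).symm
    have h6 : ∀ k : Fin n,
        (if ((σ k : Fin n) : ℕ) < i ∧ i ≤ (k : ℕ) then (1:ℤ) else 0)
          - (if (k : ℕ) < i ∧ i ≤ ((σ k : Fin n) : ℕ) then (1:ℤ) else 0)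
        = (if ((σ k : Fin n) : ℕ) < i then (1:ℤ) else 0)
          - (if (k : ℕ) < i then (1:ℤ) else 0) := fun k => by
      split_ifs <;> omega
    have h7 := Finset.sum_congr rfl (fun k (_ : k ∈ Finset.univ) => h6 k)
    rw [Finset.sum_sub_distrib, Finset.sum_sub_distrib, perm_indicator_sum σ i,
      sub_self] at h7
    have : (K1.card : ℤ) = (M.card : ℤ) := by rw [h1, h2, h3]; linarith
    exact_mod_cast this
  let μ : {x // x ∈ K1} ≃ {x // x ∈ M} := Finset.equivOfCardEq hcard
  set L : List (Fin n → ℤ) :=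
      (K1.attach.toList.map fun k : {x // x ∈ K1} =>
        Pi.single ((μ k).1) (1:ℤ) - s k.1 • Pi.single (σ k.1) 1)
      ++ (D.attach.toList.map fun k : {x // x ∈ D} => Pi.single (σ k.1) (2:ℤ)) with hL
  have hmem : ∀ u ∈ L, u ∈ typeCPositiveRoots n := by
    intro u hu
    rcases List.mem_append.1 hu with h | h <;> obtain ⟨k, hk, rfl⟩ := List.mem_map.1 h
    · have hk1 : ((k : Fin n) : ℕ) < i ∧ i ≤ ((σ (k : Fin n) : Fin n) : ℕ) :=
        (Finset.mem_filter.1 k.2).2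
      have hm1 : ((μ k : Fin n) : ℕ) < i ∧ i ≤ ((σ.symm (μ k : Fin n) : Fin n) : ℕ) :=
        (Finset.mem_filter.1 (μ k).2).2
      have hlt : (μ k : Fin n) < σ (k : Fin n) := by
        rw [Fin.lt_def]; omega
      right
      refine ⟨(μ k : Fin n), σ (k : Fin n), hlt, ?_⟩
      rcases hs (k : Fin n) with h1 | h1
      · left; rw [h1, one_smul]
      · right; rw [h1, neg_smul, one_smul, sub_neg_eq_add]
    · exact Or.inl ⟨σ (k : Fin n), rfl⟩
  have hsum : L.sum = v := by
    rw [hL, List.sum_append, sum_toList_map, sum_toList_map]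
    funext q
    rw [Pi.add_apply, Finset.sum_apply, Finset.sum_apply]
    simp only [Pi.sub_apply, Pi.smul_apply, smul_eq_mul, Pi.single_apply]
    rw [Finset.sum_sub_distrib]
    have e1 : ∑ k ∈ K1.attach, (if q = (μ k : Fin n) then (1:ℤ) else 0)
        = if q ∈ M then 1 else 0 := by
      have h0 : ∑ k ∈ K1.attach, (if q = (μ k : Fin n) then (1:ℤ) else 0)
          = ∑ m ∈ M.attach, (if q = (m : Fin n) then (1:ℤ) else 0) := by
        rw [show K1.attach = (Finset.univ : Finset {x // x ∈ K1}) from rfl,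
          show M.attach = (Finset.univ : Finset {x // x ∈ M}) from rfl]
        exact Fintype.sum_equiv μ _ _ fun k => rfl
      rw [h0, Finset.sum_attach M (fun m => if q = m then (1:ℤ) else 0),
        Finset.sum_ite_eq]
    have e2 : ∑ k ∈ K1.attach, s (k : Fin n) * (if q = σ (k : Fin n) then (1:ℤ) else 0)
        = if σ.symm q ∈ K1 then s (σ.symm q) else 0 := by
      rw [Finset.sum_attach K1 (fun k => s k * (if q = σ k then (1:ℤ) else 0))]
      have h0 : ∀ k ∈ K1, s k * (if q = σ k then (1:ℤ) else 0)
          = if σ.symm q = k then s k else 0 := by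
        intro k _
        rcases eq_or_ne q (σ k) with h | h
        · rw [if_pos h, mul_one, if_pos ((Equiv.symm_apply_eq σ).2 h)]
        · rw [if_neg h, mul_zero, if_neg]
          intro hc; exact h (by rw [← hc, Equiv.apply_symm_apply])
      rw [Finset.sum_congr rfl h0, Finset.sum_ite_eq]
    have e3 : ∑ k ∈ D.attach, (if q = σ (k : Fin n) then (2:ℤ) else 0)
        = if σ.symm q ∈ D then 2 else 0 := by
      rw [Finset.sum_attach D (fun k => if q = σ k then (2:ℤ) else 0)]
      have h0 : ∀ k ∈ D, (if q = σ k then (2:ℤ) else 0)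
          = if σ.symm q = k then 2 else 0 := by
        intro k _
        rcases eq_or_ne q (σ k) with h | h
        · rw [if_pos h, if_pos ((Equiv.symm_apply_eq σ).2 h)]
        · rw [if_neg h, if_neg]
          intro hc; exact h (by rw [← hc, Equiv.apply_symm_apply])
      rw [Finset.sum_congr rfl h0, Finset.sum_ite_eq]
    rw [e1, e2, e3]
    simp only [hv, hM, hK1, hD, Finset.mem_filter, Finset.mem_univ, true_and,
      Equiv.apply_symm_apply]
    exact pointwise_v i (q : ℕ) ((σ.symm q : Fin n) : ℕ) (s (σ.symm q)) (hs _)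
  have hlen : L.length
      = (Finset.univ.filter (fun j : Fin n =>
          (j : ℕ) < i ∧ s j = 1 ∧ i ≤ ((σ j : Fin n) : ℕ))).card +
        (Finset.univ.filter (fun j : Fin n => (j : ℕ) < i ∧ s j = -1)).card := by
    rw [hL, List.length_append, List.length_map, List.length_map,
      Finset.length_toList, Finset.length_toList, Finset.card_attach,
      Finset.card_attach, hK1, hD]
    rw [Finset.card_filter, Finset.card_filter, Finset.card_filter, Finset.card_filter,
      ← Finset.sum_add_distrib, ← Finset.sum_add_distrib]
    exact Finset.sum_congr rfl fun k _ =>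
      pointwise_len i (k : ℕ) ((σ k : Fin n) : ℕ) (s k) (hs k)
  constructor
  · exact ⟨L, hmem, hsum, hlen⟩
  · rintro N ⟨l, hl, hsuml, rfl⟩
    have hb := list_bound l hl
    rw [hsuml] at hb
    have hkey : ∑ m, |v m|
        = 2 * (((Finset.univ.filter (fun j : Fin n =>
            (j : ℕ) < i ∧ s j = 1 ∧ i ≤ ((σ j : Fin n) : ℕ))).card : ℤ) +
          ((Finset.univ.filter (fun j : Fin n => (j : ℕ) < i ∧ s j = -1)).card : ℤ)) := by
      have h1 : ∑ m, |v m|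
          = ∑ k, |(if ((σ k : Fin n) : ℕ) < i then (1:ℤ) else 0)
              - s k * (if (k : ℕ) < i then (1:ℤ) else 0)| :=
        (Fintype.sum_equiv σ
          (fun k => |(if ((σ k : Fin n) : ℕ) < i then (1:ℤ) else 0)
              - s k * (if (k : ℕ) < i then (1:ℤ) else 0)|)
          (fun m => |v m|) (fun k => by rw [hv]; simp)).symm
      have h2 : ∀ k : Fin n,
          |(if ((σ k : Fin n) : ℕ) < i then (1:ℤ) else 0)
              - s k * (if (k : ℕ) < i then (1:ℤ) else 0)|
          = 2 * ((if (k : ℕ) < i ∧ s k = 1 ∧ i ≤ ((σ k : Fin n) : ℕ) then (1:ℤ) else 0)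
              + (if (k : ℕ) < i ∧ s k = -1 then (1:ℤ) else 0))
            + ((if ((σ k : Fin n) : ℕ) < i then (1:ℤ) else 0)
              - (if (k : ℕ) < i then (1:ℤ) else 0)) := fun k =>
        pointwise_abs i (k : ℕ) ((σ k : Fin n) : ℕ) (s k) (hs k)
      rw [h1, Finset.sum_congr rfl fun k _ => h2 k, Finset.sum_add_distrib,
        Finset.sum_sub_distrib, perm_indicator_sum σ i, sub_self, add_zero,
        ← Finset.mul_sum, Finset.sum_add_distrib,
        ← card_filter_int (fun k : Fin n => (k : ℕ) < i ∧ s k = 1 ∧ i ≤ ((σ k : Fin n) : ℕ)),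
        ← card_filter_int (fun k : Fin n => (k : ℕ) < i ∧ s k = -1)]
    rw [hkey] at hb
    have : (((Finset.univ.filter (fun j : Fin n =>
            (j : ℕ) < i ∧ s j = 1 ∧ i ≤ ((σ j : Fin n) : ℕ))).card : ℤ) +
          ((Finset.univ.filter (fun j : Fin n => (j : ℕ) < i ∧ s j = -1)).card : ℤ))
        ≤ (l.length : ℤ) := by linarith
    exact_mod_cast this
end

section
/- PBW degrees of the standard basis of fundamental 𝔰𝔩_n-modules: let n ≥ 2, 1 ≤ k ≤ n, let 𝔤 = 𝔰𝔩_n(ℂ) act on M = ⋀^k ℂ^n by derivations (X·(v₁∧⋯∧v_k) = Σ_i v₁∧⋯∧Xv_i∧⋯∧v_k), let 𝔫⁻ ⊂ 𝔤 be the strictly lower triangular matrices, and let v = e₁∧⋯∧e_k. For every subset J = {j₁ < ⋯ < j_k} ⊆ {1,…,n}, the vector e_J = e_{j₁}∧⋯∧e_{j_k} lies in F_d but not in F_{d−1} of the PBW filtration of M generated by v, where d = #{j ∈ J : j > k} (with F_{−1} = 0). -/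
open Function Finset

/-- The PBW filtration on a module `M` generated by a vector `v`, with respect to
a set `S` of linear operators (the action of a Lie subalgebra `𝔫⁻`):
`F 0 = span {v}`, `F (s+1) = F s + span {T u : T ∈ S, u ∈ F s}`. -/
def pbwFiltration {R M : Type*} [CommRing R] [AddCommGroup M] [Module R M]
    (S : Set (Module.End R M)) (v : M) : ℕ → Submodule R M
  | 0 => Submodule.span R {v}
  | s + 1 => pbwFiltration S v s ⊔
      Submodule.span R {u | ∃ T ∈ S, ∃ m ∈ pbwFiltration S v s, u = T m}

/-- `v₁ ∧ ⋯ ∧ v_k` as an element of the exterior power `⋀^k ℂ^n`. -/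
noncomputable def wedge (n k : ℕ) (v : Fin k → (Fin n → ℂ)) :
    ⋀[ℂ]^k (Fin n → ℂ) :=
  ⟨ExteriorAlgebra.ιMulti ℂ k v,
    ExteriorAlgebra.ιMulti_range ℂ k (Set.mem_range_self v)⟩

variable {R M : Type*} [CommRing R] [AddCommGroup M] [Module R M]

lemma pbw_zero (S : Set (Module.End R M)) (v : M) :
    pbwFiltration S v 0 = Submodule.span R {v} := rfl

lemma pbw_succ (S : Set (Module.End R M)) (v : M) (s : ℕ) :
    pbwFiltration S v (s+1) = pbwFiltration S v s ⊔
      Submodule.span R {u | ∃ T ∈ S, ∃ m ∈ pbwFiltration S v s, u = T m} := rfl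

/-- the multilinear part of the derivation alternating map -/
noncomputable def derivMulti (k : ℕ) (f : M →ₗ[R] M) :
    MultilinearMap R (fun _ : Fin k => M) (ExteriorAlgebra R M) :=
  ∑ m : Fin k, (ExteriorAlgebra.ιMulti R k).toMultilinearMap.compLinearMap
    (fun i => if i = m then f else LinearMap.id)

lemma derivMulti_apply (k : ℕ) (f : M →ₗ[R] M) (v : Fin k → M) :
    derivMulti k f v = ∑ m : Fin k,
      ExteriorAlgebra.ιMulti R k (Function.update v m (f (v m))) := by
  rw [derivMulti, MultilinearMap.sum_apply]
  refine Finset.sum_congr rfl fun m _ => ?_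
  simp only [MultilinearMap.compLinearMap_apply, AlternatingMap.coe_multilinearMap]
  congr 1
  funext i
  rcases eq_or_ne i m with rfl | h
  · simp
  · simp [h, Function.update_of_ne h]

variable {R M : Type*} [CommRing R] [AddCommGroup M] [Module R M]

lemma deriv_sum_zero (k : ℕ) (f : M →ₗ[R] M) (v : Fin k → M) (i j : Fin k)
    (hv : v i = v j) (hij : i ≠ j) :
    ∑ m : Fin k, ExteriorAlgebra.ιMulti R k (Function.update v m (f (v m))) = 0 := by
  have hterm : ∀ m : Fin k, m ≠ i → m ≠ j →
      ExteriorAlgebra.ιMulti R k (Function.update v m (f (v m))) = 0 := by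
    intro m hmi hmj
    exact (ExteriorAlgebra.ιMulti R k).map_eq_zero_of_eq _
      (by rw [Function.update_of_ne hmi.symm, Function.update_of_ne hmj.symm]; exact hv) hij
  have hswap : Function.update v j (f (v j)) =
      (Function.update v i (f (v i))) ∘ Equiv.swap i j := by
    funext a
    rcases eq_or_ne a i with rfl | hai
    · rw [comp_apply, Equiv.swap_apply_left, Function.update_of_ne hij,
        Function.update_of_ne hij.symm, hv]
    rcases eq_or_ne a j with rfl | haj
    · rw [comp_apply, Equiv.swap_apply_right, Function.update_self, Function.update_self, hv]
    · rw [comp_apply, Equiv.swap_apply_of_ne_of_ne hai haj, Function.update_of_ne hai,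
        Function.update_of_ne haj]
  rw [← Finset.add_sum_erase _ _ (Finset.mem_univ i),
      ← Finset.add_sum_erase _ _ (Finset.mem_erase.mpr ⟨hij.symm, Finset.mem_univ j⟩)]
  rw [Finset.sum_eq_zero (fun m hm => hterm m
      (Finset.ne_of_mem_erase (Finset.mem_of_mem_erase hm))
      (Finset.ne_of_mem_erase hm))]
  rw [hswap, (ExteriorAlgebra.ιMulti R k).map_swap (Function.update v i (f (v i))) hij]
  abel

/-- The derivation `v₁∧⋯∧v_k ↦ Σ_m v₁∧⋯∧f(v_m)∧⋯∧v_k` as an alternating map. -/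
noncomputable def derivAlt (k : ℕ) (f : M →ₗ[R] M) :
    M [⋀^Fin k]→ₗ[R] ExteriorAlgebra R M :=
  { derivMulti k f with
    map_eq_zero_of_eq' := fun v i j hv hij => by
      show derivMulti k f v = 0
      rw [derivMulti_apply]
      exact deriv_sum_zero k f v i j hv hij }

lemma derivAlt_apply (k : ℕ) (f : M →ₗ[R] M) (v : Fin k → M) :
    derivAlt k f v = ∑ m : Fin k,
      ExteriorAlgebra.ιMulti R k (Function.update v m (f (v m))) :=
  derivMulti_apply k f v

lemma lift_deriv_mem (k : ℕ) (f : M →ₗ[R] M) :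
    ∀ x ∈ ⋀[R]^k M,
      ExteriorAlgebra.liftAlternating
        (Pi.single (M := fun i => M [⋀^Fin i]→ₗ[R] ExteriorAlgebra R M) k (derivAlt k f)) x
        ∈ ⋀[R]^k M := by
  intro x hx
  rw [← ExteriorAlgebra.ιMulti_span_fixedDegree] at hx
  induction hx using Submodule.span_induction with
  | mem y hy =>
    obtain ⟨v, rfl⟩ := hy
    rw [ExteriorAlgebra.liftAlternating_apply_ιMulti, Pi.single_eq_same, derivAlt_apply]
    exact Submodule.sum_mem _ fun m _ =>
      ExteriorAlgebra.ιMulti_range R k (Set.mem_range_self _)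
  | zero => rw [map_zero]; exact Submodule.zero_mem _
  | add a b _ _ ha hb => rw [map_add]; exact Submodule.add_mem _ ha hb
  | smul r a _ ha => rw [map_smul]; exact Submodule.smul_mem _ r ha

/-- The induced endomorphism of the exterior power. -/
noncomputable def derivEnd (n k : ℕ) (X : Matrix (Fin n) (Fin n) ℂ) :
    Module.End ℂ (⋀[ℂ]^k (Fin n → ℂ)) :=
  LinearMap.restrict _ (lift_deriv_mem k X.mulVecLin)

lemma derivEnd_apply (n k : ℕ) (X : Matrix (Fin n) (Fin n) ℂ) (v : Fin k → (Fin n → ℂ)) :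
    derivEnd n k X (wedge n k v) =
      ∑ i : Fin k, wedge n k (Function.update v i (X.mulVec (v i))) := by
  apply Subtype.ext
  have h1 : ((derivEnd n k X (wedge n k v) : ⋀[ℂ]^k (Fin n → ℂ)) :
      ExteriorAlgebra ℂ (Fin n → ℂ)) = ExteriorAlgebra.liftAlternating
        (Pi.single (M := fun i => (Fin n → ℂ) [⋀^Fin i]→ₗ[ℂ] ExteriorAlgebra ℂ (Fin n → ℂ)) k
          (derivAlt k X.mulVecLin)) (ExteriorAlgebra.ιMulti ℂ k v) := rfl
  rw [h1, ExteriorAlgebra.liftAlternating_apply_ιMulti, Pi.single_eq_same, derivAlt_apply]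
  rw [Submodule.coe_sum]
  refine Finset.sum_congr rfl fun m _ => ?_
  have : X.mulVecLin (v m) = X.mulVec (v m) := rfl
  rw [this]
  rfl

/-- The operators on `⋀^k ℂ^n` given by the derivation action
`X·(v₁∧⋯∧v_k) = Σ_i v₁∧⋯∧Xv_i∧⋯∧v_k` of a strictly lower triangular matrix `X`
(these are exactly the elements of `𝔫⁻ ⊂ 𝔰𝔩_n(ℂ)`). -/
def lowerTriangularDerivations (n k : ℕ) :
    Set (Module.End ℂ (⋀[ℂ]^k (Fin n → ℂ))) :=
  {T | ∃ X : Matrix (Fin n) (Fin n) ℂ,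
    (∀ i j : Fin n, i ≤ j → X i j = 0) ∧
    ∀ v : Fin k → (Fin n → ℂ),
      T (wedge n k v) = ∑ i : Fin k, wedge n k (Function.update v i (X.mulVec (v i)))}

lemma derivEnd_mem (n k : ℕ) (X : Matrix (Fin n) (Fin n) ℂ)
    (hX : ∀ i j : Fin n, i ≤ j → X i j = 0) :
    derivEnd n k X ∈ lowerTriangularDerivations n k :=
  ⟨X, hX, derivEnd_apply n k X⟩

/- basic wedge lemmas -/
lemma wedge_coord_zero (n k : ℕ) (v : Fin k → (Fin n → ℂ)) (i : Fin k) (h : v i = 0) :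
    wedge n k v = 0 := by
  apply Subtype.ext
  show ExteriorAlgebra.ιMulti ℂ k v = 0
  exact (ExteriorAlgebra.ιMulti ℂ k).toMultilinearMap.map_coord_zero i h

lemma wedge_update_smul (n k : ℕ) (v : Fin k → (Fin n → ℂ)) (i : Fin k) (c : ℂ)
    (w : Fin n → ℂ) :
    wedge n k (Function.update v i (c • w)) = c • wedge n k (Function.update v i w) := by
  apply Subtype.ext
  show ExteriorAlgebra.ιMulti ℂ k _ = c • ExteriorAlgebra.ιMulti ℂ k _
  exact (ExteriorAlgebra.ιMulti ℂ k).toMultilinearMap.map_update_smul _ i c w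

lemma wedge_update_sum (n k : ℕ) {α : Type*} (t : Finset α) (v : Fin k → (Fin n → ℂ))
    (i : Fin k) (g : α → (Fin n → ℂ)) :
    wedge n k (Function.update v i (∑ a ∈ t, g a)) =
      ∑ a ∈ t, wedge n k (Function.update v i (g a)) := by
  apply Subtype.ext
  rw [Submodule.coe_sum]
  show ExteriorAlgebra.ιMulti ℂ k _ = _
  exact (ExteriorAlgebra.ιMulti ℂ k).toMultilinearMap.map_update_sum t i g v

lemma wedge_comp_perm (n k : ℕ) (v : Fin k → (Fin n → ℂ)) (σ : Equiv.Perm (Fin k)) :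
    wedge n k (v ∘ σ) = ((Equiv.Perm.sign σ : ℤ) : ℂ) • wedge n k v := by
  apply Subtype.ext
  show ExteriorAlgebra.ιMulti ℂ k _ = ((Equiv.Perm.sign σ : ℤ) : ℂ) •
    ExteriorAlgebra.ιMulti ℂ k v
  rw [(ExteriorAlgebra.ιMulti ℂ k).map_perm v σ]
  rcases Int.units_eq_one_or (Equiv.Perm.sign σ) with h | h <;> rw [h] <;> simp

/-- The auxiliary "weight" filtration. -/
noncomputable def Wfil (n k s : ℕ) : Submodule ℂ (⋀[ℂ]^k (Fin n → ℂ)) :=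
  Submodule.span ℂ {x | ∃ c : Fin k → Fin n,
    (Finset.univ.filter fun i => k ≤ ((c i : ℕ))).card ≤ s ∧
    x = wedge n k (fun i => Pi.single (c i) 1)}

lemma Wfil_mono (n k : ℕ) {s s' : ℕ} (h : s ≤ s') : Wfil n k s ≤ Wfil n k s' :=
  Submodule.span_mono (fun _x ⟨c, hc, he⟩ => ⟨c, hc.trans h, he⟩)

lemma T_maps_W (n k s : ℕ) {T : Module.End ℂ (⋀[ℂ]^k (Fin n → ℂ))}
    (hT : T ∈ lowerTriangularDerivations n k) {x : ⋀[ℂ]^k (Fin n → ℂ)}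
    (hx : x ∈ Wfil n k s) : T x ∈ Wfil n k (s + 1) := by
  obtain ⟨X, _hXlow, hTv⟩ := hT
  induction hx using Submodule.span_induction with
  | mem y hy =>
    obtain ⟨c, hcs, rfl⟩ := hy
    rw [hTv]
    refine Submodule.sum_mem _ fun m _ => ?_
    have hvec : X.mulVec (Pi.single (c m) 1) = ∑ a : Fin n, X a (c m) • (Pi.single a 1 : Fin n → ℂ) := by
      funext b
      simp [Matrix.mulVec_single, Finset.sum_apply, Pi.single_apply]
    rw [hvec, wedge_update_sum]
    refine Submodule.sum_mem _ fun a _ => ?_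
    rw [wedge_update_smul]
    refine Submodule.smul_mem _ _ (Submodule.subset_span ⟨Function.update c m a, ?_, ?_⟩)
    · calc (Finset.univ.filter fun i => k ≤ ((Function.update c m a i : Fin n) : ℕ)).card
          ≤ (insert m (Finset.univ.filter fun i => k ≤ ((c i : ℕ)))).card := by
            refine Finset.card_le_card fun i hi => ?_
            rcases eq_or_ne i m with rfl | h
            · exact Finset.mem_insert_self _ _
            · refine Finset.mem_insert_of_mem ?_
              simp only [Finset.mem_filter] at hi ⊢
              rwa [Function.update_of_ne h] at hi
        _ ≤ (Finset.univ.filter fun i => k ≤ ((c i : ℕ))).card + 1 := Finset.card_insert_le _ _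
        _ ≤ s + 1 := by omega
    · congr 1
      funext i
      rcases eq_or_ne i m with rfl | h
      · rw [Function.update_self, Function.update_self]
      · rw [Function.update_of_ne h, Function.update_of_ne h]
  | zero => rw [map_zero]; exact Submodule.zero_mem _
  | add a b _ _ ha hb => rw [map_add]; exact Submodule.add_mem _ ha hb
  | smul r a _ ha => rw [map_smul]; exact Submodule.smul_mem _ r ha

lemma pbw_le_W (n k : ℕ) (hkn : k ≤ n) (s : ℕ) :
    pbwFiltration (lowerTriangularDerivations n k)
      (wedge n k fun i => Pi.single (Fin.castLE hkn i) 1) s ≤ Wfil n k s := by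
  induction s with
  | zero =>
    rw [pbw_zero, Submodule.span_le, Set.singleton_subset_iff]
    refine Submodule.subset_span ⟨fun i => Fin.castLE hkn i, ?_, rfl⟩
    have : (Finset.univ.filter fun i : Fin k => k ≤ ((Fin.castLE hkn i : Fin n) : ℕ)) = ∅ := by
      refine Finset.filter_eq_empty_iff.mpr fun i _ => ?_
      simp only [Fin.coe_castLE]
      omega
    rw [this]
    simp
  | succ s ih =>
    rw [pbw_succ]
    apply sup_le
    · exact ih.trans (Wfil_mono n k (Nat.le_succ s))
    · rw [Submodule.span_le]
      rintro x ⟨T, hT, m, hm, rfl⟩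
      exact T_maps_W n k s hT (ih hm)

/-- dual functional given by the `J`-minor. -/
noncomputable def phiJ (n k : ℕ) (J : Finset (Fin n)) (hJ : J.card = k) :
    (⋀[ℂ]^k (Fin n → ℂ)) →ₗ[ℂ] ℂ :=
  (ExteriorAlgebra.liftAlternating (Pi.single (M := fun i => (Fin n → ℂ) [⋀^Fin i]→ₗ[ℂ] ℂ) k
    ((Matrix.detRowAlternating).compLinearMap
      (LinearMap.funLeft ℂ ℂ fun l : Fin k => ((J.orderIsoOfFin hJ l : Fin n)))))).comp
    (⋀[ℂ]^k (Fin n → ℂ)).subtype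

lemma phiJ_wedge (n k : ℕ) (J : Finset (Fin n)) (hJ : J.card = k)
    (v : Fin k → (Fin n → ℂ)) :
    phiJ n k J hJ (wedge n k v) =
      Matrix.det (Matrix.of fun i l => v i ((J.orderIsoOfFin hJ l : Fin n))) := by
  rw [phiJ, LinearMap.comp_apply]
  have h1 : ((⋀[ℂ]^k (Fin n → ℂ)).subtype (wedge n k v)) = ExteriorAlgebra.ιMulti ℂ k v := rfl
  rw [h1, ExteriorAlgebra.liftAlternating_apply_ιMulti, Pi.single_eq_same,
    AlternatingMap.compLinearMap_apply]
  rfl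

lemma cnt_eq (n k : ℕ) (J : Finset (Fin n)) (hJ : J.card = k) (c : Fin k → Fin n)
    (hcinj : Function.Injective c) (hall : ∀ i, c i ∈ J) :
    (Finset.univ.filter fun i => k ≤ ((c i : ℕ))).card =
      (J.filter fun j : Fin n => k ≤ ((j : ℕ))).card := by
  have himg : Finset.univ.image c = J :=
    Finset.eq_of_subset_of_card_le
      (fun j hj => by obtain ⟨i, _, rfl⟩ := Finset.mem_image.mp hj; exact hall i)
      (by rw [Finset.card_image_of_injective _ hcinj, Finset.card_univ, Fintype.card_fin, hJ])
  refine Finset.card_bij (fun i _ => c i) ?_ ?_ ?_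
  · intro i hi
    exact Finset.mem_filter.mpr ⟨hall i, (Finset.mem_filter.mp hi).2⟩
  · intro a _ b _ h
    exact hcinj h
  · intro j hj
    have : j ∈ Finset.univ.image c := by rw [himg]; exact (Finset.mem_filter.mp hj).1
    obtain ⟨i, _, rfl⟩ := Finset.mem_image.mp this
    exact ⟨i, Finset.mem_filter.mpr ⟨Finset.mem_univ i, (Finset.mem_filter.mp hj).2⟩, rfl⟩

lemma wedge_mem_pbw (n k : ℕ) (hkn : k ≤ n) :
    ∀ (t : ℕ) (c : Fin k → Fin n), Function.Injective c →
      (Finset.univ.filter fun i => k ≤ ((c i : ℕ))).card = t →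
      wedge n k (fun i => Pi.single (c i) 1) ∈
        pbwFiltration (lowerTriangularDerivations n k)
          (wedge n k fun i => Pi.single (Fin.castLE hkn i) 1) t := by
  intro t
  induction t with
  | zero =>
    intro c hcinj hcard
    have hall : ∀ i, (c i : ℕ) < k := by
      intro i
      by_contra h
      push_neg at h
      have hi : i ∈ Finset.univ.filter fun i => k ≤ ((c i : ℕ)) :=
        Finset.mem_filter.mpr ⟨Finset.mem_univ _, h⟩
      rw [Finset.card_eq_zero] at hcard
      rw [hcard] at hi
      exact absurd hi (Finset.notMem_empty _)
    set σf : Fin k → Fin k := fun i => ⟨(c i : ℕ), hall i⟩ with hσf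
    have hσinj : Function.Injective σf := by
      intro a b hab
      have h2 : (σf a).val = (σf b).val := congrArg Fin.val hab
      exact hcinj (Fin.ext h2)
    let σ : Equiv.Perm (Fin k) :=
      Equiv.ofBijective σf ⟨hσinj, Finite.injective_iff_surjective.mp hσinj⟩
    have htup : (fun i => Pi.single (c i) (1:ℂ)) =
        (fun i => Pi.single (Fin.castLE hkn i) (1:ℂ)) ∘ σ := by
      funext i
      show (Pi.single (c i) 1 : Fin n → ℂ) = Pi.single (Fin.castLE hkn (σf i)) 1
      have hci : c i = Fin.castLE hkn (σf i) := Fin.ext rfl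
      rw [hci]
    rw [htup, wedge_comp_perm, pbw_zero]
    exact Submodule.smul_mem _ _ (Submodule.mem_span_singleton_self _)
  | succ t ih =>
    intro c hcinj hcard
    have hpos : 0 < (Finset.univ.filter fun i => k ≤ ((c i : ℕ))).card := by omega
    obtain ⟨i₀, hi₀⟩ := Finset.card_pos.mp hpos
    have hki₀ : k ≤ (c i₀ : ℕ) := (Finset.mem_filter.mp hi₀).2
    obtain ⟨b, hbk, hbr⟩ : ∃ b : Fin n, (b : ℕ) < k ∧ ∀ i, c i ≠ b := by
      by_contra h
      push_neg at h
      have hBsub : (Finset.univ.filter fun x : Fin n => (x : ℕ) < k) ⊆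
          (Finset.univ.filter fun i => ((c i : ℕ)) < k).image c := by
        intro x hx
        obtain ⟨i, hi⟩ := h x (Finset.mem_filter.mp hx).2
        refine Finset.mem_image.mpr ⟨i, Finset.mem_filter.mpr ⟨Finset.mem_univ _, ?_⟩, hi⟩
        rw [hi]
        exact (Finset.mem_filter.mp hx).2
      have hBcard : (Finset.univ.filter fun x : Fin n => (x : ℕ) < k).card = k := by
        have : (Finset.univ.filter fun x : Fin n => (x : ℕ) < k) =
            (Finset.univ : Finset (Fin k)).image (Fin.castLE hkn) := by
          ext x
          constructor
          · intro hx
            have hx2 : (x : ℕ) < k := (Finset.mem_filter.mp hx).2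
            exact Finset.mem_image.mpr ⟨⟨(x : ℕ), hx2⟩, Finset.mem_univ _, Fin.ext rfl⟩
          · intro hx
            obtain ⟨i, _, rfl⟩ := Finset.mem_image.mp hx
            exact Finset.mem_filter.mpr ⟨Finset.mem_univ _, by simpa using i.isLt⟩
        rw [this, Finset.card_image_of_injective _ (Fin.castLE_injective hkn),
          Finset.card_univ, Fintype.card_fin]
      have hsplit : (Finset.univ.filter fun i => k ≤ ((c i : ℕ))).card +
          (Finset.univ.filter fun i => ((c i : ℕ)) < k).card = k := by
        have h3 := Finset.card_filter_add_card_filter_not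
          (s := (Finset.univ : Finset (Fin k))) (p := fun i => k ≤ ((c i : ℕ)))
        simp only [Finset.card_univ, Fintype.card_fin] at h3
        have hf : (Finset.univ.filter fun i => ((c i : ℕ)) < k) =
            (Finset.univ.filter fun a => ¬ k ≤ ((c a : ℕ))) := by
          ext i
          simp [not_le]
        rw [hf]
        exact h3
      have h1 : k ≤ ((Finset.univ.filter fun i => ((c i : ℕ)) < k).image c).card := by
        have h4 := Finset.card_le_card hBsub
        omega
      have h2 : ((Finset.univ.filter fun i => ((c i : ℕ)) < k).image c).card ≤
          (Finset.univ.filter fun i => ((c i : ℕ)) < k).card := Finset.card_image_le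
      omega
    have hblt : (b : ℕ) < (c i₀ : ℕ) := lt_of_lt_of_le hbk hki₀
    set c' := Function.update c i₀ b with hc'def
    have hc'inj : Function.Injective c' := by
      intro a a' haa
      rcases eq_or_ne a i₀ with rfl | ha
      · rcases eq_or_ne a' a with rfl | ha'
        · rfl
        · exfalso
          rw [hc'def, Function.update_self, Function.update_of_ne ha'] at haa
          exact hbr a' haa.symm
      · rcases eq_or_ne a' i₀ with rfl | ha'
        · exfalso
          rw [hc'def, Function.update_self, Function.update_of_ne ha] at haa
          exact hbr a haa
        · rw [hc'def, Function.update_of_ne ha, Function.update_of_ne ha'] at haa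
          exact hcinj haa
    have hc'card : (Finset.univ.filter fun i => k ≤ ((c' i : ℕ))).card = t := by
      have hfe : (Finset.univ.filter fun i => k ≤ ((c' i : ℕ))) =
          (Finset.univ.filter fun i => k ≤ ((c i : ℕ))).erase i₀ := by
        ext i
        simp only [Finset.mem_filter, Finset.mem_erase, Finset.mem_univ, true_and]
        rcases eq_or_ne i i₀ with rfl | h
        · rw [hc'def, Function.update_self]
          simp only [ne_eq, not_true_eq_false, false_and, iff_false, not_le]
          exact hbk
        · rw [hc'def, Function.update_of_ne h]
          simp [h]
      rw [hfe, Finset.card_erase_of_mem hi₀, hcard]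
      omega
    have hmem := ih c' hc'inj hc'card
    set X : Matrix (Fin n) (Fin n) ℂ :=
      Matrix.of fun a b' => if a = c i₀ ∧ b' = b then 1 else 0 with hXdef
    have hXlow : ∀ i j : Fin n, i ≤ j → X i j = 0 := by
      intro i j hij
      rw [hXdef]
      show (if i = c i₀ ∧ j = b then (1:ℂ) else 0) = 0
      rw [if_neg]
      rintro ⟨rfl, rfl⟩
      exact absurd (Fin.le_def.mp hij) (by omega)
    have hT := derivEnd_mem n k X hXlow
    have hTval : derivEnd n k X (wedge n k (fun i => Pi.single (c' i) 1)) =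
        wedge n k (fun i => Pi.single (c i) 1) := by
      rw [derivEnd_apply]
      rw [Finset.sum_eq_single i₀]
      · have hvec : X.mulVec (Pi.single (c' i₀) 1) = (Pi.single (c i₀) 1 : Fin n → ℂ) := by
          have hb : c' i₀ = b := by rw [hc'def, Function.update_self]
          funext a
          rw [hb]
          simp only [Matrix.mulVec_single]
          show X a b * 1 = (Pi.single (c i₀) 1 : Fin n → ℂ) a
          rw [mul_one, hXdef, Pi.single_apply]
          show (if a = c i₀ ∧ b = b then (1:ℂ) else 0) = if a = c i₀ then 1 else 0
          simp
        rw [hvec]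
        congr 1
        funext i
        rcases eq_or_ne i i₀ with rfl | h
        · rw [Function.update_self]
        · rw [Function.update_of_ne h, hc'def, Function.update_of_ne h]
      · intro m _ hm
        apply wedge_coord_zero n k _ m
        rw [Function.update_self]
        have hcm : c' m = c m := by rw [hc'def, Function.update_of_ne hm]
        funext a
        rw [hcm]
        simp only [Matrix.mulVec_single]
        show X a (c m) * 1 = 0
        rw [mul_one, hXdef]
        show (if a = c i₀ ∧ c m = b then (1:ℂ) else 0) = 0
        rw [if_neg]
        rintro ⟨_, h2⟩
        exact hbr m h2
      · intro h
        exact absurd (Finset.mem_univ i₀) h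
    rw [pbw_succ]
    apply Submodule.mem_sup_right
    apply Submodule.subset_span
    exact ⟨derivEnd n k X, hT, _, hmem, hTval.symm⟩

/-- PBW degrees of the standard basis of the fundamental `𝔰𝔩_n`-module `⋀^k ℂ^n`:
for a `k`-element subset `J = {j₁ < ⋯ < j_k}` of `{1,…,n}`, the vector
`e_J = e_{j₁} ∧ ⋯ ∧ e_{j_k}` lies in `F_d` but not in `F_{d-1}` of the PBW
filtration generated by `v = e₁ ∧ ⋯ ∧ e_k`, where `d = #{j ∈ J : j > k}`
(in the 0-based indexing used here, `j > k` reads `k ≤ j`). -/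
theorem pbw_degree_fundamental_sln (n k : ℕ) (hn : 2 ≤ n) (hk1 : 1 ≤ k) (hkn : k ≤ n)
    (J : Finset (Fin n)) (hJ : J.card = k) :
    IsLeast {s : ℕ |
        wedge n k (fun i => Pi.single ((J.orderIsoOfFin hJ i : Fin n)) 1) ∈
          pbwFiltration (lowerTriangularDerivations n k)
            (wedge n k (fun i => Pi.single (Fin.castLE hkn i) 1)) s}
      ((J.filter (fun j : Fin n => k ≤ (j : ℕ))).card) := by
  have hcinj : Function.Injective (fun i => ((J.orderIsoOfFin hJ i : Fin n))) := by
    intro a b hab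
    exact (J.orderIsoOfFin hJ).injective (Subtype.ext hab)
  have hall : ∀ i, ((J.orderIsoOfFin hJ i : Fin n)) ∈ J := fun i => (J.orderIsoOfFin hJ i).2
  have hcnt := cnt_eq n k J hJ (fun i => ((J.orderIsoOfFin hJ i : Fin n))) hcinj hall
  constructor
  · have hm := wedge_mem_pbw n k hkn _ (fun i => ((J.orderIsoOfFin hJ i : Fin n))) hcinj rfl
    rw [hcnt] at hm
    exact hm
  · intro s hs
    by_contra hlt
    push_neg at hlt
    have h1 : wedge n k (fun i => Pi.single ((J.orderIsoOfFin hJ i : Fin n)) 1) ∈ Wfil n k s :=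
      pbw_le_W n k hkn s hs
    have hker : Wfil n k s ≤ LinearMap.ker (phiJ n k J hJ) := by
      rw [Wfil, Submodule.span_le]
      rintro x ⟨c₂, hc₂s, rfl⟩
      simp only [SetLike.mem_coe, LinearMap.mem_ker]
      rw [phiJ_wedge]
      by_cases hinj : Function.Injective c₂
      · have hnotall : ¬ ∀ i, c₂ i ∈ J := by
          intro hall₂
          have hd := cnt_eq n k J hJ c₂ hinj hall₂
          omega
        push_neg at hnotall
        obtain ⟨i, hiJ⟩ := hnotall
        apply Matrix.det_eq_zero_of_row_eq_zero i
        intro l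
        show (Pi.single (c₂ i) 1 : Fin n → ℂ) ((J.orderIsoOfFin hJ l : Fin n)) = 0
        rw [Pi.single_apply, if_neg]
        intro h
        exact hiJ (h ▸ (J.orderIsoOfFin hJ l).2)
      · rw [Function.not_injective_iff] at hinj
        obtain ⟨a, b, hab, hne⟩ := hinj
        apply Matrix.det_zero_of_row_eq hne
        funext l
        show (Pi.single (c₂ a) 1 : Fin n → ℂ) ((J.orderIsoOfFin hJ l : Fin n)) =
          (Pi.single (c₂ b) 1 : Fin n → ℂ) ((J.orderIsoOfFin hJ l : Fin n))
        rw [hab]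
    have h2 := hker h1
    rw [LinearMap.mem_ker, phiJ_wedge] at h2
    have h3 : (Matrix.of fun i l => (Pi.single ((J.orderIsoOfFin hJ i : Fin n)) 1 : Fin n → ℂ)
        ((J.orderIsoOfFin hJ l : Fin n))) = (1 : Matrix (Fin k) (Fin k) ℂ) := by
      ext i l
      rw [Matrix.of_apply, Pi.single_apply, Matrix.one_apply]
      by_cases h : i = l
      · subst h
        simp
      · rw [if_neg, if_neg h]
        intro hh
        exact h (hcinj hh).symm
    rw [h3, Matrix.det_one] at h2
    exact one_ne_zero h2
end
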